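/- For every real q > 1 and p := −q, every greedy cover φ' of a set cover instance and every cover φ of the same instance satisfy M_{−q}(φ) ≤ n^{1−1/q} · ζ(q)^{1/q} · M_{−q}(φ'), where ζ(q) = ∑_{j=1}^{∞} j^{−q} is the Riemann zeta function. In other words, the greedy algorithm approximates the maximum (−q)-mean set cover problem within a factor of n^{1−1/q} ζ(q)^{1/q}. -/

import Mathlib

open Finset

/-- A set cover instance: a collection of subsets of a finite ground set `V` whose union is `V`. -/
structure SetCoverInstance (V : Type*) [Fintype V] [DecidableEq V] where
  sets : Finset (Finset V)
  covers : ∀ v : V, ∃ S ∈ sets, v ∈ S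

/-- A cover: an assignment of each element to a subset of the collection containing it. -/
structure Cover {V : Type*} [Fintype V] [DecidableEq V] (I : SetCoverInstance V) where
  φ : V → Finset V
  mem_sets : ∀ v, φ v ∈ I.sets
  self_mem : ∀ v, v ∈ φ v

variable {V : Type*} [Fintype V] [DecidableEq V] {I : SetCoverInstance V}

/-- `a_v`: the size of the part containing `v`. -/
def Cover.a (c : Cover I) (v : V) : ℕ :=
  (Finset.univ.filter fun w => c.φ w = c.φ v).card

/-- `c_i`: the size of the part assigned to subset `S`. -/
def Cover.partSize (c : Cover I) (S : Finset V) : ℕ :=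
  (Finset.univ.filter fun w => c.φ w = S).card

/-- A greedy cover: its parts can be ordered `P 0, …, P (m-1)` so that each `P j` is obtained by
choosing a subset covering a maximum number of yet-uncovered elements. -/
def Cover.IsGreedy (c : Cover I) : Prop :=
  ∃ (m : ℕ) (P : ℕ → Finset V),
    (∀ v : V, ∃ j < m, v ∈ P j) ∧
    (∀ j < m, ∃ S ∈ I.sets,
      P j = S \ (Finset.range j).biUnion P ∧
      ∀ T ∈ I.sets, (T \ (Finset.range j).biUnion P).card ≤ (P j).card) ∧
    (∀ j < m, ∀ v ∈ P j, (Finset.univ.filter fun w => c.φ w = c.φ v) = P j)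

/-- The generalized `p`-mean of the part sizes `a_v`, over the elements. -/
noncomputable def Cover.pMean (c : Cover I) (p : ℝ) : ℝ :=
  ((1 / (Fintype.card V : ℝ)) * ∑ v : V, (c.a v : ℝ) ^ p) ^ (1 / p)

set_option maxHeartbeats 1000000 in
/-- for every real `q > 1`, every greedy cover `c'` and every cover `c`,
`M_{-q}(c) ≤ n^{1-1/q} · ζ(q)^{1/q} · M_{-q}(c')`, where `ζ(q) = ∑_{j=1}^∞ j^{-q}`. -/
theorem greedy_negMean_approx (q : ℝ) (hq : 1 < q)
    (c' : Cover I) (hc' : c'.IsGreedy) (c : Cover I) :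
    c.pMean (-q) ≤
      (Fintype.card V : ℝ) ^ (1 - 1 / q) *
        (∑' j : ℕ, ((j : ℝ) + 1) ^ (-q)) ^ (1 / q) * c'.pMean (-q) := by
  classical
  have hq0 : (0 : ℝ) < q := lt_trans one_pos hq
  set Z : ℝ := ∑' j : ℕ, ((j : ℝ) + 1) ^ (-q) with hZdef
  -- summability of the zeta series
  have hsummable : Summable (fun j : ℕ => ((j : ℝ) + 1) ^ (-q)) := by
    have h1 : Summable (fun j : ℕ => ((j : ℝ)) ^ (-q)) := by
      rw [Real.summable_nat_rpow]; linarith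
    have h2 := (summable_nat_add_iff 1).2 h1
    refine h2.congr fun j => ?_
    push_cast
    ring_nf
  have hterm_nonneg : ∀ j : ℕ, 0 ≤ ((j : ℝ) + 1) ^ (-q) := fun j =>
    Real.rpow_nonneg (by positivity) _
  have hZ1 : (1 : ℝ) ≤ Z := by
    have h0 := Summable.sum_le_tsum {0} (fun j (_ : j ∉ ({0} : Finset ℕ)) => hterm_nonneg j) hsummable
    simpa using h0
  have hZ0 : (0 : ℝ) < Z := lt_of_lt_of_le one_pos hZ1
  -- dispose of the empty case
  rcases Nat.eq_zero_or_pos (Fintype.card V) with h0 | hpos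
  · have hV : IsEmpty V := Fintype.card_eq_zero_iff.mp h0
    have huniv : (Finset.univ : Finset V) = ∅ := Finset.univ_eq_empty
    have hne : (-q)⁻¹ ≠ (0 : ℝ) := by
      simp only [ne_eq, inv_eq_zero, neg_eq_zero]
      intro h; nlinarith
    have hne' : -q⁻¹ ≠ (0 : ℝ) := by rw [← inv_neg]; exact hne
    simp [Cover.pMean, huniv, h0, Real.zero_rpow hne, Real.zero_rpow hne']
  have hn0 : (0 : ℝ) < (Fintype.card V : ℝ) := by exact_mod_cast hpos
  have hVne : Nonempty V := Fintype.card_pos_iff.mp hpos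
  -- unpack greediness
  obtain ⟨m, P, hcov, hgr, hfib⟩ := hc'
  have hcov' : ∀ v : V, ∃ j, j < m ∧ v ∈ P j := by
    intro v; obtain ⟨j, hj, hv⟩ := hcov v; exact ⟨j, hj, hv⟩
  let jdx : V → ℕ := fun v => Nat.find (hcov' v)
  have jdx_lt : ∀ v, jdx v < m := fun v => (Nat.find_spec (hcov' v)).1
  have mem_jdx : ∀ v, v ∈ P (jdx v) := fun v => (Nat.find_spec (hcov' v)).2
  have jdx_eq : ∀ j, j < m → ∀ v ∈ P j, jdx v = j := by
    intro j hj v hv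
    have hle : jdx v ≤ j := Nat.find_min' (hcov' v) ⟨hj, hv⟩
    rcases lt_or_eq_of_le hle with hlt | he
    · -- contradiction with P j = S \ earlier parts
      obtain ⟨S, _, hPeq, _⟩ := hgr j hj
      have : v ∉ (Finset.range j).biUnion P := by
        rw [hPeq] at hv
        exact (Finset.mem_sdiff.mp hv).2
      exact absurd (Finset.mem_biUnion.mpr ⟨jdx v, Finset.mem_range.mpr hlt, mem_jdx v⟩) this
    · exact he
  -- a' v equals the size of the greedy part containing v
  have ha'_eq : ∀ v, c'.a v = (P (jdx v)).card := by
    intro v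
    have := hfib (jdx v) (jdx_lt v) v (mem_jdx v)
    rw [Cover.a, this]
  -- greedy bound: the tail of the fiber of v (w.r.t. c) bounds c'.a v
  have hgreedy_bound : ∀ v : V,
      ((Finset.univ.filter fun w => c.φ w = c.φ v).filter fun w => jdx v ≤ jdx w).card
        ≤ c'.a v := by
    intro v
    obtain ⟨S, hS, hPeq, hmax⟩ := hgr (jdx v) (jdx_lt v)
    have hsub : ((Finset.univ.filter fun w => c.φ w = c.φ v).filter fun w => jdx v ≤ jdx w)
        ⊆ c.φ v \ (Finset.range (jdx v)).biUnion P := by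
      intro w hw
      simp only [Finset.mem_filter, Finset.mem_univ, true_and] at hw
      obtain ⟨hfw, hjw⟩ := hw
      refine Finset.mem_sdiff.mpr ⟨?_, ?_⟩
      · have := c.self_mem w; rwa [hfw] at this
      · intro hmem
        obtain ⟨i, hi, hwi⟩ := Finset.mem_biUnion.mp hmem
        rw [Finset.mem_range] at hi
        have : jdx w = i := jdx_eq i (lt_trans hi (jdx_lt v)) w hwi
        omega
    calc ((Finset.univ.filter fun w => c.φ w = c.φ v).filter fun w => jdx v ≤ jdx w).card
        ≤ (c.φ v \ (Finset.range (jdx v)).biUnion P).card := Finset.card_le_card hsub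
      _ ≤ (P (jdx v)).card := hmax (c.φ v) (c.mem_sets v)
      _ = c'.a v := (ha'_eq v).symm
  -- an injection giving element ranks
  let g : V → ℕ := fun v => (Fintype.equivFin V v : ℕ)
  have ginj : Function.Injective g := fun u v h =>
    (Fintype.equivFin V).injective (Fin.val_injective h)
  -- part sizes are positive
  have ha_pos : ∀ (d : Cover I) (v : V), 0 < d.a v := by
    intro d v
    apply Finset.card_pos.mpr
    exact ⟨v, Finset.mem_filter.mpr ⟨Finset.mem_univ v, rfl⟩⟩
  -- the two total sums
  set Sc : ℝ := ∑ v : V, (c.a v : ℝ) ^ (-q) with hScdef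
  set Sc' : ℝ := ∑ v : V, (c'.a v : ℝ) ^ (-q) with hSc'def
  have hSc_pos : 0 < Sc := by
    apply Finset.sum_pos
    · intro v _
      exact Real.rpow_pos_of_pos (by exact_mod_cast ha_pos c v) _
    · exact Finset.univ_nonempty
  have hSc'_pos : 0 < Sc' := by
    apply Finset.sum_pos
    · intro v _
      exact Real.rpow_pos_of_pos (by exact_mod_cast ha_pos c' v) _
    · exact Finset.univ_nonempty
  -- the key inequality, fiberwise
  have hmain : Sc' ≤ Z * (Fintype.card V : ℝ) ^ (q - 1) * Sc := by
    have hsplit : ∀ F : V → ℝ, ∑ v : V, F v =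
        ∑ S0 ∈ Finset.univ.image c.φ, ∑ v ∈ Finset.univ.filter fun w => c.φ w = S0, F v :=
      fun F => (Finset.sum_fiberwise_of_maps_to
        (fun x _ => Finset.mem_image_of_mem _ (Finset.mem_univ x)) F).symm
    rw [hScdef, hSc'def, hsplit (fun v => (c'.a v : ℝ) ^ (-q)),
      hsplit (fun v => (c.a v : ℝ) ^ (-q)), Finset.mul_sum]
    apply Finset.sum_le_sum
    intro S0 hS0
    set Q : Finset V := Finset.univ.filter fun w => c.φ w = S0 with hQdef
    have hQne : Q.Nonempty := by
      obtain ⟨v0, _, hv0⟩ := Finset.mem_image.mp hS0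
      exact ⟨v0, Finset.mem_filter.mpr ⟨Finset.mem_univ v0, hv0⟩⟩
    have hQcard_pos : 0 < Q.card := Finset.card_pos.mpr hQne
    have hQcard_le : Q.card ≤ Fintype.card V := by
      rw [← Finset.card_univ]; exact Finset.card_le_card (Finset.filter_subset _ _)
    -- (A): for v in Q, the fiber of v under c equals Q
    have hfQ : ∀ v ∈ Q, (Finset.univ.filter fun w => c.φ w = c.φ v) = Q := by
      intro v hv
      have hv' : c.φ v = S0 := (Finset.mem_filter.mp hv).2
      rw [hQdef, hv']
    -- (B): sum over Q of (c.a v)^(-q) equals (Q.card)^(1-q)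
    have hBsum : ∑ v ∈ Q, (c.a v : ℝ) ^ (-q) = (Q.card : ℝ) ^ (1 - q) := by
      have : ∀ v ∈ Q, (c.a v : ℝ) ^ (-q) = (Q.card : ℝ) ^ (-q) := by
        intro v hv
        rw [Cover.a, hfQ v hv]
      rw [Finset.sum_congr rfl this, Finset.sum_const, nsmul_eq_mul]
      rw [show (1 : ℝ) - q = 1 + (-q) by ring,
        Real.rpow_add (by exact_mod_cast hQcard_pos) , Real.rpow_one]
    -- the rank function f on Q
    set f : V → ℕ := fun v =>
      (Q.filter fun w => jdx v < jdx w).card +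
      (Q.filter fun w => jdx w = jdx v ∧ g w ≤ g v).card with hfdef
    have hdisjAB : ∀ v : V,
        Disjoint (Q.filter fun w => jdx v < jdx w)
          (Q.filter fun w => jdx w = jdx v ∧ g w ≤ g v) := by
      intro v
      rw [Finset.disjoint_left]
      intro w hw1 hw2
      have h1 := (Finset.mem_filter.mp hw1).2
      have h2 := (Finset.mem_filter.mp hw2).2.1
      omega
    have hf_le_tail : ∀ v, f v ≤ (Q.filter fun w => jdx v ≤ jdx w).card := by
      intro v
      have hfv : f v = (Q.filter fun w => jdx v < jdx w).card +
          (Q.filter fun w => jdx w = jdx v ∧ g w ≤ g v).card := rfl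
      rw [hfv, ← Finset.card_union_of_disjoint (hdisjAB v)]
      apply Finset.card_le_card
      intro w hw
      rcases Finset.mem_union.mp hw with h | h
      · obtain ⟨hwQ, hlt⟩ := Finset.mem_filter.mp h
        exact Finset.mem_filter.mpr ⟨hwQ, le_of_lt hlt⟩
      · obtain ⟨hwQ, heq, _⟩ := Finset.mem_filter.mp h
        exact Finset.mem_filter.mpr ⟨hwQ, le_of_eq heq.symm⟩
    have hf_pos : ∀ v ∈ Q, 1 ≤ f v := by
      intro v hv
      have : v ∈ Q.filter fun w => jdx w = jdx v ∧ g w ≤ g v :=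
        Finset.mem_filter.mpr ⟨hv, rfl, le_refl _⟩
      have h1 : 1 ≤ (Q.filter fun w => jdx w = jdx v ∧ g w ≤ g v).card :=
        Finset.card_pos.mpr ⟨v, this⟩
      have hfv : f v = (Q.filter fun w => jdx v < jdx w).card +
          (Q.filter fun w => jdx w = jdx v ∧ g w ≤ g v).card := rfl
      omega
    have hf_le_card : ∀ v, f v ≤ Q.card := fun v =>
      le_trans (hf_le_tail v) (Finset.card_le_card (Finset.filter_subset _ _))
    have hf_le_a' : ∀ v ∈ Q, f v ≤ c'.a v := by
      intro v hv
      refine le_trans (hf_le_tail v) ?_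
      have := hgreedy_bound v
      rwa [hfQ v hv] at this
    -- injectivity of f on Q
    have hmono1 : ∀ u ∈ Q, ∀ v ∈ Q, jdx u < jdx v → f v < f u := by
      intro u hu v hv hlt
      have h1 : f v ≤ (Q.filter fun w => jdx v ≤ jdx w).card := hf_le_tail v
      have h2 : (Q.filter fun w => jdx v ≤ jdx w).card ≤
          (Q.filter fun w => jdx u < jdx w).card := by
        apply Finset.card_le_card
        intro w hw
        obtain ⟨hwQ, hle⟩ := Finset.mem_filter.mp hw
        exact Finset.mem_filter.mpr ⟨hwQ, lt_of_lt_of_le hlt hle⟩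
      have h3 : 1 ≤ (Q.filter fun w => jdx w = jdx u ∧ g w ≤ g u).card :=
        Finset.card_pos.mpr ⟨u, Finset.mem_filter.mpr ⟨hu, rfl, le_refl _⟩⟩
      have : f u = (Q.filter fun w => jdx u < jdx w).card +
          (Q.filter fun w => jdx w = jdx u ∧ g w ≤ g u).card := rfl
      omega
    have hmono2 : ∀ u ∈ Q, ∀ v ∈ Q, jdx u = jdx v → g u < g v → f u < f v := by
      intro u hu v hv hje hglt
      have hAeq : (Q.filter fun w => jdx u < jdx w) = (Q.filter fun w => jdx v < jdx w) := by
        rw [hje]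
      have hBlt : (Q.filter fun w => jdx w = jdx u ∧ g w ≤ g u).card <
          (Q.filter fun w => jdx w = jdx v ∧ g w ≤ g v).card := by
        apply Finset.card_lt_card
        constructor
        · intro w hw
          obtain ⟨hwQ, he, hle⟩ := Finset.mem_filter.mp hw
          exact Finset.mem_filter.mpr ⟨hwQ, he.trans hje, le_of_lt (lt_of_le_of_lt hle hglt)⟩
        · intro hsub
          have : v ∈ Q.filter fun w => jdx w = jdx u ∧ g w ≤ g u :=
            hsub (Finset.mem_filter.mpr ⟨hv, rfl, le_refl _⟩)
          have := (Finset.mem_filter.mp this).2.2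
          omega
      have hfu : f u = (Q.filter fun w => jdx u < jdx w).card +
          (Q.filter fun w => jdx w = jdx u ∧ g w ≤ g u).card := rfl
      have hfv : f v = (Q.filter fun w => jdx v < jdx w).card +
          (Q.filter fun w => jdx w = jdx v ∧ g w ≤ g v).card := rfl
      rw [hfu, hfv, hAeq]
      omega
    have hinj : ∀ u ∈ Q, ∀ v ∈ Q, f u = f v → u = v := by
      intro u hu v hv hfe
      by_contra hne
      rcases lt_trichotomy (jdx u) (jdx v) with h | h | h
      · have := hmono1 u hu v hv h; omega
      · rcases lt_trichotomy (g u) (g v) with hg | hg | hg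
        · have := hmono2 u hu v hv h hg; omega
        · exact hne (ginj hg)
        · have := hmono2 v hv u hu h.symm hg; omega
      · have := hmono1 v hv u hu h; omega
    -- bound the c'-sum over the fiber by Z
    have hCsum : ∑ v ∈ Q, (c'.a v : ℝ) ^ (-q) ≤ Z := by
      have step1 : ∑ v ∈ Q, (c'.a v : ℝ) ^ (-q) ≤ ∑ v ∈ Q, (f v : ℝ) ^ (-q) := by
        apply Finset.sum_le_sum
        intro v hv
        apply Real.rpow_le_rpow_of_nonpos
        · exact_mod_cast hf_pos v hv
        · exact_mod_cast hf_le_a' v hv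
        · linarith
      have step2 : ∑ v ∈ Q, (f v : ℝ) ^ (-q) = ∑ t ∈ Q.image f, (t : ℝ) ^ (-q) := by
        rw [Finset.sum_image hinj]
      have step3 : ∑ t ∈ Q.image f, (t : ℝ) ^ (-q) ≤
          ∑ t ∈ Finset.Icc 1 Q.card, (t : ℝ) ^ (-q) := by
        apply Finset.sum_le_sum_of_subset_of_nonneg
        · intro t ht
          obtain ⟨v, hv, hvt⟩ := Finset.mem_image.mp ht
          exact Finset.mem_Icc.mpr ⟨hvt ▸ hf_pos v hv, hvt ▸ hf_le_card v⟩
        · intro t _ _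
          exact Real.rpow_nonneg (Nat.cast_nonneg t) _
      have step4 : ∑ t ∈ Finset.Icc 1 Q.card, (t : ℝ) ^ (-q) ≤ Z := by
        have hIcc : Finset.Icc 1 Q.card = Finset.Ico 1 (Q.card + 1) := by
          rw [Finset.Ico_add_one_right_eq_Icc]
        rw [hIcc, Finset.sum_Ico_eq_sum_range]
        have : ∀ j ∈ Finset.range (Q.card + 1 - 1), ((1 + j : ℕ) : ℝ) ^ (-q)
            = ((j : ℝ) + 1) ^ (-q) := by
          intro j _
          congr 1
          push_cast
          ring
        rw [Finset.sum_congr rfl this]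
        exact Summable.sum_le_tsum _ (fun j _ => hterm_nonneg j) hsummable
      linarith
    -- combine: fiberwise inequality
    have hlow : 1 ≤ (Fintype.card V : ℝ) ^ (q - 1) * ∑ v ∈ Q, (c.a v : ℝ) ^ (-q) := by
      rw [hBsum]
      have h1 : ((Fintype.card V : ℝ)) ^ (1 - q) ≤ ((Q.card : ℝ)) ^ (1 - q) := by
        apply Real.rpow_le_rpow_of_nonpos
        · exact_mod_cast hQcard_pos
        · exact_mod_cast hQcard_le
        · linarith
      calc (1 : ℝ) = (Fintype.card V : ℝ) ^ (q - 1) * (Fintype.card V : ℝ) ^ (1 - q) := by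
            rw [← Real.rpow_add hn0]
            norm_num
        _ ≤ (Fintype.card V : ℝ) ^ (q - 1) * (Q.card : ℝ) ^ (1 - q) := by
            apply mul_le_mul_of_nonneg_left h1 (Real.rpow_nonneg (le_of_lt hn0) _)
    calc ∑ v ∈ Q, (c'.a v : ℝ) ^ (-q) ≤ Z := hCsum
      _ = Z * 1 := (mul_one Z).symm
      _ ≤ Z * ((Fintype.card V : ℝ) ^ (q - 1) * ∑ v ∈ Q, (c.a v : ℝ) ^ (-q)) :=
          mul_le_mul_of_nonneg_left hlow (le_of_lt hZ0)
      _ = Z * (Fintype.card V : ℝ) ^ (q - 1) * ∑ v ∈ Q, (c.a v : ℝ) ^ (-q) := by ring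
  -- final algebra
  rw [Cover.pMean, Cover.pMean, ← hScdef, ← hSc'def]
  set n' : ℝ := (Fintype.card V : ℝ) with hn'def
  have hr : (0 : ℝ) < 1 / q := by positivity
  have hXpos : 0 < 1 / n' * Sc := by positivity
  have hYpos : 0 < 1 / n' * Sc' := by positivity
  have hneg : 1 / (-q) = -(1 / q) := by rw [div_neg]
  rw [hneg, Real.rpow_neg (le_of_lt hXpos), Real.rpow_neg (le_of_lt hYpos),
    ← Real.inv_rpow (le_of_lt hXpos), ← Real.inv_rpow (le_of_lt hYpos)]
  have hqne : q ≠ 0 := ne_of_gt hq0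
  have hpow : (n' ^ (q - 1)) ^ (1 / q) = n' ^ (1 - 1 / q) := by
    rw [← Real.rpow_mul (le_of_lt hn0)]
    congr 1
    field_simp
  have hkey : (1 / n' * Sc)⁻¹ ≤ n' ^ (q - 1) * Z * (1 / n' * Sc')⁻¹ := by
    have h1 : (1 / n' * Sc)⁻¹ = n' / Sc := by
      field_simp
    have h2 : (1 / n' * Sc')⁻¹ = n' / Sc' := by
      field_simp
    rw [h1, h2, ← mul_div_assoc, div_le_div_iff₀ hSc_pos hSc'_pos]
    have hm := mul_le_mul_of_nonneg_left hmain (le_of_lt hn0)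
    nlinarith [hm]
  calc (1 / n' * Sc)⁻¹ ^ (1 / q)
      ≤ (n' ^ (q - 1) * Z * (1 / n' * Sc')⁻¹) ^ (1 / q) :=
        Real.rpow_le_rpow (by positivity) hkey (le_of_lt hr)
    _ = (n' ^ (q - 1)) ^ (1 / q) * Z ^ (1 / q) * ((1 / n' * Sc')⁻¹) ^ (1 / q) := by
        rw [Real.mul_rpow (by positivity) (by positivity),
          Real.mul_rpow (by positivity) (le_of_lt hZ0)]
    _ = n' ^ (1 - 1 / q) * Z ^ (1 / q) * ((1 / n' * Sc')⁻¹) ^ (1 / q) := by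
        rw [hpow]
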